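/- arXiv:2310.19997 — 4 statements merged into one kernel-verified Lean document; each statement's English description precedes it below -/
import Mathlib

section
/- Let Z and U be types, f : Z × U → Z, l : Z × U → ℝ, Vf : Z → ℝ, κ : Z → U, and Zf ⊆ Z such that for all z ∈ Zf: f(z, κ(z)) ∈ Zf and Vf(f(z, κ(z))) − Vf(z) ≤ −l(z, κ(z)). Let N ≥ 1, let v_0, …, v_{N−1} ∈ U be a control sequence and z_0, …, z_N ∈ Z the induced trajectory with z_{i+1} = f(z_i, v_i), and suppose z_N ∈ Zf. Define the cost J = Σ_{i=0}^{N−1} l(z_i, v_i) + Vf(z_N). Define the shifted control sequence v'_i = v_{i+1} for i = 0, …, N−2 and v'_{N−1} = κ(z_N), with induced trajectory z'_i = z_{i+1} for i = 0, …, N−1 (so z'_N = f(z_N, κ(z_N))), and shifted cost J' = Σ_{i=0}^{N−1} l(z'_i, v'_i) + Vf(z'_N). Then J' ≤ J − l(z_0, v_0). -/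
/-- The shifted-sequence cost-decrease argument (paper's Theorem 6): with terminal set
`Zf`, terminal controller `κ` satisfying invariance and the terminal decrease condition,
the cost of the shifted control sequence satisfies `J' ≤ J − l(z_0, v_0)`. -/
theorem shifted_cost_decrease {Z U : Type*}
    (f : Z × U → Z) (l : Z × U → ℝ) (Vf : Z → ℝ) (κ : Z → U) (Zf : Set Z)
    (hinv : ∀ z ∈ Zf, f (z, κ z) ∈ Zf)
    (hdec : ∀ z ∈ Zf, Vf (f (z, κ z)) - Vf z ≤ - l (z, κ z))
    (N : ℕ) (hN : 1 ≤ N)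
    (v : ℕ → U) (z : ℕ → Z)
    (hz : ∀ i < N, z (i + 1) = f (z i, v i))
    (hzN : z N ∈ Zf)
    (v' : ℕ → U) (z' : ℕ → Z)
    (hv' : ∀ i < N - 1, v' i = v (i + 1))
    (hv'N : v' (N - 1) = κ (z N))
    (hz' : ∀ i < N, z' i = z (i + 1))
    (hz'N : z' N = f (z N, κ (z N))) :
    (∑ i ∈ Finset.range N, l (z' i, v' i)) + Vf (z' N)
      ≤ ((∑ i ∈ Finset.range N, l (z i, v i)) + Vf (z N)) - l (z 0, v 0) := by
  obtain ⟨M, rfl⟩ : ∃ M, N = M + 1 := ⟨N - 1, (Nat.succ_pred_eq_of_pos hN).symm⟩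
  have hsum' : ∑ i ∈ Finset.range (M + 1), l (z' i, v' i)
      = (∑ i ∈ Finset.range M, l (z (i + 1), v (i + 1))) + l (z (M + 1), κ (z (M + 1))) := by
    rw [Finset.sum_range_succ]
    congr 1
    · apply Finset.sum_congr rfl
      intro i hi
      have hi' := Finset.mem_range.mp hi
      rw [hz' i (by omega), hv' i (by omega)]
    · rw [hz' M (by omega)]
      simp only [Nat.add_sub_cancel] at hv'N
      rw [hv'N]
  have hsum : ∑ i ∈ Finset.range (M + 1), l (z i, v i)
      = (∑ i ∈ Finset.range M, l (z (i + 1), v (i + 1))) + l (z 0, v 0) :=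
    Finset.sum_range_succ' _ M
  have hd := hdec _ hzN
  rw [hsum', hsum, hz'N]
  linarith
end

section
/- Let ρ > 0, νmax > 0 and e ∈ ℝ with |e| < π/4. For u₂ ∈ ℝ, the following four inequalities hold simultaneously: ρ(cos e − sin e)u₂ ≤ νmax, ρ(sin e + cos e)u₂ ≤ νmax, ρ(sin e − cos e)u₂ ≤ νmax and −ρ(sin e + cos e)u₂ ≤ νmax, if and only if |u₂| ≤ (νmax/ρ)·λ(e), where λ(e) = 1/(cos e + |sin e|). -/
open Real

/-- The four rows of the transformed input-constraint polytope at `u₁ = 0` hold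
simultaneously iff `|u₂| ≤ (νmax/ρ) · λ(e)`, where `λ(e) = 1/(cos e + |sin e|)`. -/
theorem angular_velocity_bound (ρ νmax : ℝ) (hρ : 0 < ρ) (hν : 0 < νmax)
    (e : ℝ) (he : |e| < π / 4) (u2 : ℝ) :
    (ρ * (Real.cos e - Real.sin e) * u2 ≤ νmax ∧
     ρ * (Real.sin e + Real.cos e) * u2 ≤ νmax ∧
     ρ * (Real.sin e - Real.cos e) * u2 ≤ νmax ∧
     -(ρ * (Real.sin e + Real.cos e) * u2) ≤ νmax)
    ↔ |u2| ≤ (νmax / ρ) * (1 / (Real.cos e + |Real.sin e|)) := by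
  have hpi : (0:ℝ) < π := Real.pi_pos
  obtain ⟨hel, her⟩ := abs_lt.mp he
  have hcos : Real.cos (π/4) < Real.cos |e| :=
    Real.cos_lt_cos_of_nonneg_of_le_pi (abs_nonneg e) (by linarith) he
  rw [Real.cos_abs, Real.cos_pi_div_four] at hcos
  have hsin1 : Real.sin e < Real.sin (π/4) :=
    Real.sin_lt_sin_of_lt_of_le_pi_div_two (by linarith) (by linarith) her
  have hsin2 : Real.sin (-(π/4)) < Real.sin e :=
    Real.sin_lt_sin_of_lt_of_le_pi_div_two (by linarith) (by linarith) hel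
  rw [Real.sin_pi_div_four] at hsin1
  rw [Real.sin_neg, Real.sin_pi_div_four] at hsin2
  have hsin : |Real.sin e| < Real.sqrt 2 / 2 := abs_lt.mpr ⟨hsin2, hsin1⟩
  have hs : |Real.sin e| < Real.cos e := lt_trans hsin hcos
  have hcos0 : 0 < Real.cos e := lt_of_le_of_lt (abs_nonneg _) hs
  have hd : 0 < Real.cos e + |Real.sin e| := by positivity
  have key : (νmax / ρ) * (1 / (Real.cos e + |Real.sin e|))
      = νmax / (ρ * (Real.cos e + |Real.sin e|)) := by
    field_simp
  rw [key, le_div_iff₀ (by positivity)]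
  constructor
  · rintro ⟨h1, h2, h3, h4⟩
    rcases abs_cases u2 with ⟨hu, hu'⟩ | ⟨hu, hu'⟩ <;>
      rcases abs_cases (Real.sin e) with ⟨hv, hv'⟩ | ⟨hv, hv'⟩ <;>
      rw [hu, hv] <;> nlinarith
  · intro h
    have hb : ∀ a : ℝ, |a| ≤ Real.cos e + |Real.sin e| → ρ * a * u2 ≤ νmax := by
      intro a ha
      calc ρ * a * u2 ≤ |ρ * a * u2| := le_abs_self _
        _ = ρ * |a| * |u2| := by rw [abs_mul, abs_mul, abs_of_pos hρ]
        _ ≤ ρ * (Real.cos e + |Real.sin e|) * |u2| :=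
            mul_le_mul_of_nonneg_right (mul_le_mul_of_nonneg_left ha hρ.le) (abs_nonneg u2)
        _ = |u2| * (ρ * (Real.cos e + |Real.sin e|)) := by ring
        _ ≤ νmax := h
    have b1 : |Real.cos e - Real.sin e| ≤ Real.cos e + |Real.sin e| := by
      rcases abs_cases (Real.cos e - Real.sin e) with ⟨h', _⟩ | ⟨h', _⟩ <;> rw [h'] <;>
        linarith [le_abs_self (Real.sin e), neg_abs_le (Real.sin e)]
    have b2 : |Real.sin e + Real.cos e| ≤ Real.cos e + |Real.sin e| := by
      rcases abs_cases (Real.sin e + Real.cos e) with ⟨h', _⟩ | ⟨h', _⟩ <;> rw [h'] <;>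
        linarith [le_abs_self (Real.sin e), neg_abs_le (Real.sin e)]
    have b3 : |Real.sin e - Real.cos e| ≤ Real.cos e + |Real.sin e| := by
      rcases abs_cases (Real.sin e - Real.cos e) with ⟨h', _⟩ | ⟨h', _⟩ <;> rw [h'] <;>
        linarith [le_abs_self (Real.sin e), neg_abs_le (Real.sin e)]
    have b4 : |(-(Real.sin e + Real.cos e))| ≤ Real.cos e + |Real.sin e| := by
      rw [abs_neg]; exact b2
    have h4 := hb _ b4
    exact ⟨hb _ b1, hb _ b2, hb _ b3, by linarith [h4]⟩
end

section
/- Let νmax > 0 and e ∈ ℝ with |e| < π/4. For u₁ ∈ ℝ, the following four inequalities hold simultaneously: (cos e + sin e)u₁ ≤ νmax, (−cos e + sin e)u₁ ≤ νmax, −(cos e + sin e)u₁ ≤ νmax and (cos e − sin e)u₁ ≤ νmax, if and only if |u₁| ≤ νmax·λ(e), where λ(e) = 1/(cos e + |sin e|). -/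
open Real

lemma abs_sin_lt_cos {e : ℝ} (he : |e| < π / 4) : |Real.sin e| < Real.cos e := by
  have h0 : (0:ℝ) ≤ |e| := abs_nonneg e
  have hpi : (0:ℝ) < π := Real.pi_pos
  have hlt : e < π := by nlinarith [abs_lt.1 he]
  have h1 : |Real.sin e| = Real.sin |e| := by
    rcases le_or_gt 0 e with h | h
    · rw [abs_of_nonneg h, abs_of_nonneg (Real.sin_nonneg_of_nonneg_of_le_pi h hlt.le)]
    · rw [abs_of_neg h, Real.sin_neg, abs_of_nonpos
        (Real.sin_nonpos_of_nonpos_of_neg_pi_le h.le (by nlinarith [abs_lt.1 he]))]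
  rw [h1, ← Real.cos_abs]
  have : Real.cos |e| = Real.sin (π/2 - |e|) := by rw [Real.sin_pi_div_two_sub]
  rw [this]
  apply Real.sin_lt_sin_of_lt_of_le_pi_div_two (by linarith) (by linarith) (by linarith)

/-- The four rows of the transformed input-constraint polytope at `u₂ = 0` hold
simultaneously iff `|u₁| ≤ νmax · λ(e)`, where `λ(e) = 1/(cos e + |sin e|)`. -/
theorem linear_velocity_bound (νmax : ℝ) (hν : 0 < νmax)
    (e : ℝ) (he : |e| < π / 4) (u1 : ℝ) :
    ((Real.cos e + Real.sin e) * u1 ≤ νmax ∧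
     (-Real.cos e + Real.sin e) * u1 ≤ νmax ∧
     -((Real.cos e + Real.sin e) * u1) ≤ νmax ∧
     (Real.cos e - Real.sin e) * u1 ≤ νmax)
    ↔ |u1| ≤ νmax * (1 / (Real.cos e + |Real.sin e|)) := by
  set c := Real.cos e
  set s := Real.sin e
  have hsc : |s| < c := abs_sin_lt_cos he
  have hs : (0:ℝ) ≤ |s| := abs_nonneg s
  have hpos : 0 < c + |s| := by linarith
  have hgoal : νmax * (1 / (c + |s|)) = νmax / (c + |s|) := by ring
  rw [hgoal, le_div_iff₀ hpos]
  constructor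
  · rintro ⟨h1, h2, h3, h4⟩
    rcases abs_cases s with ⟨hs1, hs2⟩ | ⟨hs1, hs2⟩
    · rw [hs1]
      calc |u1| * (c + s) = |(c + s) * u1| := by
            rw [abs_mul, abs_of_nonneg (by linarith : (0:ℝ) ≤ c + s)]; ring
        _ ≤ νmax := abs_le.2 ⟨by linarith, h1⟩
    · rw [hs1]
      calc |u1| * (c + -s) = |(c - s) * u1| := by
            rw [abs_mul, abs_of_nonneg (by linarith : (0:ℝ) ≤ c - s)]; ring
        _ ≤ νmax := abs_le.2 ⟨by linarith, h4⟩
  · intro h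
    have key : ∀ a : ℝ, |a| ≤ c + |s| → a * u1 ≤ νmax := by
      intro a ha
      calc a * u1 ≤ |a * u1| := le_abs_self _
        _ = |a| * |u1| := abs_mul a u1
        _ ≤ (c + |s|) * |u1| := by
            exact mul_le_mul_of_nonneg_right ha (abs_nonneg u1)
        _ = |u1| * (c + |s|) := by ring
        _ ≤ νmax := h
    refine ⟨key _ ?_, key _ ?_, ?_, key _ ?_⟩
    · exact (abs_add_le c s).trans (by rw [abs_of_nonneg (by linarith : (0:ℝ) ≤ c)])
    · calc |(-c + s)| = |c - s| := by rw [← abs_neg]; ring_nf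
        _ ≤ |c| + |s| := abs_sub c s
        _ = c + |s| := by rw [abs_of_nonneg (by linarith : (0:ℝ) ≤ c)]
    · have := key (-(c + s)) (by
        calc |(-(c+s))| = |c + s| := abs_neg _
          _ ≤ |c| + |s| := abs_add_le c s
          _ = c + |s| := by rw [abs_of_nonneg (by linarith : (0:ℝ) ≤ c)])
      linarith [this]
    · calc |c - s| ≤ |c| + |s| := abs_sub c s
        _ = c + |s| := by rw [abs_of_nonneg (by linarith : (0:ℝ) ≤ c)]
end

section
/- Let ρ > 0, νmax > 0 and define the admissible input set U = { (u₁, u₂) ∈ ℝ² : |u₁|/νmax + ρ|u₂|/νmax ≤ 1 }. For e ∈ ℝ with |e| ≤ π/4 define the matrix R(e) = [[cos e, −ρ sin e], [(1/ρ) sin e, cos e]] and λ(e) = 1/(cos e + |sin e|). Then λ(e)·U ⊆ R(e) '' U, i.e., for every u ∈ U there exists u' ∈ U with λ(e)·u = R(e)·u'. -/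
open Real Matrix

/-- `λ(e)·U ⊆ R(e) '' U`: for every `u` in the diamond-shaped admissible input set `U`,
there is `u' ∈ U` with `λ(e) • u = R(e) *ᵥ u'`, where
`R(e) = [[cos e, −ρ sin e], [(1/ρ) sin e, cos e]]` and `λ(e) = 1/(cos e + |sin e|)`. -/
theorem scaled_U_subset_image (ρ νmax : ℝ) (hρ : 0 < ρ) (hν : 0 < νmax)
    (e : ℝ) (he : |e| ≤ π / 4) :
    ∀ u : Fin 2 → ℝ, |u 0| / νmax + ρ * |u 1| / νmax ≤ 1 →
      ∃ u' : Fin 2 → ℝ, (|u' 0| / νmax + ρ * |u' 1| / νmax ≤ 1) ∧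
        (1 / (Real.cos e + |Real.sin e|)) • u =
          (!![Real.cos e, -ρ * Real.sin e; (1/ρ) * Real.sin e, Real.cos e]) *ᵥ u' := by
  intro u hu
  have hpi : (0:ℝ) < π := Real.pi_pos
  have habs := abs_le.mp he
  have hc : 0 < Real.cos e := by
    apply Real.cos_pos_of_mem_Ioo
    constructor <;> [linarith [habs.1]; linarith [habs.2]]
  set c := Real.cos e with hcdef
  set s := Real.sin e with hsdef
  have hsc : s ^ 2 + c ^ 2 = 1 := Real.sin_sq_add_cos_sq e
  have hpos : 0 < c + |s| := by positivity
  set L : ℝ := 1 / (c + |s|) with hLdef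
  have hL : 0 < L := by positivity
  refine ⟨![L * (c * u 0 + ρ * s * u 1), L * (-(1/ρ) * s * u 0 + c * u 1)], ?_, ?_⟩
  · have h0 : |L * (c * u 0 + ρ * s * u 1)| ≤ L * (c * |u 0| + ρ * |s| * |u 1|) := by
      rw [abs_mul, abs_of_pos hL]
      gcongr
      calc |c * u 0 + ρ * s * u 1| ≤ |c * u 0| + |ρ * s * u 1| := abs_add_le _ _
        _ = c * |u 0| + ρ * |s| * |u 1| := by
            rw [abs_mul, abs_mul, abs_mul, abs_of_pos hc, abs_of_pos hρ]
    have h1 : |L * (-(1/ρ) * s * u 0 + c * u 1)| ≤ L * ((1/ρ) * |s| * |u 0| + c * |u 1|) := by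
      rw [abs_mul, abs_of_pos hL]
      gcongr
      calc |(-(1/ρ) * s * u 0 + c * u 1)| ≤ |(-(1/ρ) * s * u 0)| + |c * u 1| := abs_add_le _ _
        _ = (1/ρ) * |s| * |u 0| + c * |u 1| := by
            rw [abs_mul, abs_mul, abs_mul, abs_neg, abs_of_pos hc,
              abs_of_pos (by positivity : (0:ℝ) < 1/ρ)]
    simp only [Matrix.cons_val_zero, Matrix.cons_val_one, Matrix.head_cons]
    have hexp : L * (c * |u 0| + ρ * |s| * |u 1|) + ρ * (L * (1/ρ * |s| * |u 0| + c * |u 1|))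
        = |u 0| + ρ * |u 1| := by
      rw [hLdef]
      field_simp
      ring
    have key : |L * (c * u 0 + ρ * s * u 1)| + ρ * |L * (-(1/ρ) * s * u 0 + c * u 1)|
        ≤ |u 0| + ρ * |u 1| := by
      calc |L * (c * u 0 + ρ * s * u 1)| + ρ * |L * (-(1/ρ) * s * u 0 + c * u 1)|
          ≤ L * (c * |u 0| + ρ * |s| * |u 1|) + ρ * (L * (1/ρ * |s| * |u 0| + c * |u 1|)) :=
            add_le_add h0 (mul_le_mul_of_nonneg_left h1 hρ.le)
        _ = |u 0| + ρ * |u 1| := hexp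
    rw [← add_div] at hu ⊢
    calc (|L * (c * u 0 + ρ * s * u 1)| + ρ * |L * (-(1/ρ) * s * u 0 + c * u 1)|) / νmax
        ≤ (|u 0| + ρ * |u 1|) / νmax := by gcongr
      _ ≤ 1 := hu
  · funext i
    fin_cases i <;>
      simp only [Pi.smul_apply, smul_eq_mul, Matrix.mulVec, dotProduct,
        Fin.sum_univ_two, Matrix.cons_val', Matrix.cons_val_zero, Matrix.cons_val_one,
        Matrix.head_cons, Matrix.empty_val', Matrix.cons_val_fin_one, Matrix.head_fin_const, Fin.zero_eta, Fin.mk_one, Matrix.of_apply] <;>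
      field_simp <;>
      first
        | linear_combination (-(u 0)) * hsc
        | linear_combination (-(u 1 * ρ)) * hsc
end
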